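/- Let G be a finite simple graph with star number γ(G) = k, and let G' be the graph obtained from G by adding one new vertex adjacent to every vertex of G (a universal vertex). Then γ(G') ≤ k + 1. -/

import Mathlib

open SimpleGraph

/-- A `k`-witness for a simple graph `G`: a positive weight function `w` on the vertices
together with `k` increasingly ordered intervals `[a i, b i]` of positive reals such that
two distinct vertices are adjacent iff the sum of their weights lies in ⋃ i, [a i, b i]. -/
structure StarWitness {V : Type*} (G : SimpleGraph V) (k : ℕ) where
  w : V → ℝ
  a : Fin k → ℝ
  b : Fin k → ℝ
  w_pos : ∀ v, 0 < w v
  a_pos : ∀ i, 0 < a i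
  a_le_b : ∀ i, a i ≤ b i
  ordered : ∀ i j : Fin k, i < j → b i < a j
  adj_iff : ∀ u v : V, u ≠ v →
    (G.Adj u v ↔ ∃ i : Fin k, a i ≤ w u + w v ∧ w u + w v ≤ b i)

/-- The star number `γ(G)` of a graph `G`: the smallest positive integer `k` such that
`G` admits a `k`-witness (i.e. `G` is a star-`k`-PCG). -/
noncomputable def starNumber {V : Type*} (G : SimpleGraph V) : ℕ :=
  sInf {k | 0 < k ∧ Nonempty (StarWitness G k)}

/-- A witness is left-free if the weight of every non-edge exceeds `b 1` (the right endpoint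
of the first interval). -/
def StarWitness.LeftFree {V : Type*} {G : SimpleGraph V} {k : ℕ}
    (W : StarWitness G k) : Prop :=
  ∀ u v : V, u ≠ v → ¬ G.Adj u v → ∀ i : Fin k, (i : ℕ) = 0 → W.b i < W.w u + W.w v

/-- A witness is right-free if the weight of every non-edge is below `a k` (the left endpoint
of the last interval). -/
def StarWitness.RightFree {V : Type*} {G : SimpleGraph V} {k : ℕ}
    (W : StarWitness G k) : Prop :=
  ∀ u v : V, u ≠ v → ¬ G.Adj u v → ∀ i : Fin k, (i : ℕ) = k - 1 → W.w u + W.w v < W.a i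

/-- A witness is in normal form if all weights are pairwise distinct and no doubled weight
equals the sum of the weights of two distinct vertices. -/
def StarWitness.NormalForm {V : Type*} {G : SimpleGraph V} {k : ℕ}
    (W : StarWitness G k) : Prop :=
  Function.Injective W.w ∧
    ∀ x u₁ u₂ : V, u₁ ≠ u₂ → 2 * W.w x ≠ W.w u₁ + W.w u₂

/-- The graph obtained from `G` by adding one new universal vertex (`none`). -/
def addUniversal {V : Type*} (G : SimpleGraph V) : SimpleGraph (Option V) where
  Adj x y :=
    match x, y with
    | some u, some v => G.Adj u v
    | some _, none => True
    | none, some _ => True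
    | none, none => False
  symm := by
    constructor
    rintro (_ | u) (_ | v) h
    · exact h
    · trivial
    · trivial
    · exact h.symm
  loopless := by
    constructor
    rintro (_ | u) h
    · exact h
    · exact G.irrefl h

lemma pow2_add_inj {i j k l : ℕ} (hij : i < j) (hkl : k < l)
    (h : 2 ^ i + 2 ^ j = 2 ^ k + 2 ^ l) : i = k ∧ j = l := by
  rcases lt_trichotomy j l with hjl | hjl | hjl
  · refine absurd h (Nat.ne_of_lt ?_)
    have h1 : 2 ^ i < 2 ^ j := Nat.pow_lt_pow_right (by norm_num) hij
    have h2 : 2 ^ (j + 1) ≤ 2 ^ l := Nat.pow_le_pow_right (by norm_num) hjl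
    calc 2 ^ i + 2 ^ j < 2 ^ j + 2 ^ j := Nat.add_lt_add_right h1 _
      _ = 2 ^ (j + 1) := by rw [pow_succ]; ring
      _ ≤ 2 ^ l := h2
      _ ≤ 2 ^ k + 2 ^ l := Nat.le_add_left _ _
  · subst hjl
    have : (2:ℕ) ^ i = 2 ^ k := by omega
    exact ⟨Nat.pow_right_injective (by norm_num) this, rfl⟩
  · refine absurd h.symm (Nat.ne_of_lt ?_)
    have h1 : 2 ^ k < 2 ^ l := Nat.pow_lt_pow_right (by norm_num) hkl
    have h2 : 2 ^ (l + 1) ≤ 2 ^ j := Nat.pow_le_pow_right (by norm_num) hjl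
    calc 2 ^ k + 2 ^ l < 2 ^ l + 2 ^ l := Nat.add_lt_add_right h1 _
      _ = 2 ^ (l + 1) := by rw [pow_succ]; ring
      _ ≤ 2 ^ j := h2
      _ ≤ 2 ^ i + 2 ^ j := Nat.le_add_left _ _

lemma pow2_add_inj' {i j k l : ℕ} (hij : i ≠ j) (hkl : k ≠ l)
    (h : 2 ^ i + 2 ^ j = 2 ^ k + 2 ^ l) : (i = k ∧ j = l) ∨ (i = l ∧ j = k) := by
  rcases hij.lt_or_gt with h1 | h1 <;> rcases hkl.lt_or_gt with h2 | h2
  · exact Or.inl (pow2_add_inj h1 h2 h)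
  · obtain ⟨e1, e2⟩ := pow2_add_inj h1 h2 (by omega); exact Or.inr ⟨e1, e2⟩
  · obtain ⟨e1, e2⟩ := pow2_add_inj h1 h2 (by omega); exact Or.inr ⟨e2, e1⟩
  · obtain ⟨e1, e2⟩ := pow2_add_inj h1 h2 (by omega); exact Or.inl ⟨e2, e1⟩

lemma exists_starWitness {V : Type*} [Fintype V] (G : SimpleGraph V) :
    ∃ n, 0 < n ∧ Nonempty (StarWitness G n) := by
  classical
  let e := Fintype.equivFin V
  set n := Fintype.card V with hn
  let w : V → ℝ := fun v => 2 ^ ((e v : ℕ))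
  have hwle : ∀ v, w v ≤ 2 ^ n := fun v =>
    pow_le_pow_right₀ (by norm_num) (le_of_lt (e v).isLt)
  have hwpos : ∀ v, 0 < w v := fun v => by positivity
  let P : ℝ := 2 * 2 ^ n + 1
  have hsumlt : ∀ u v : V, w u + w v < P := by
    intro u v
    simp only [P]; linarith [hwle u, hwle v]
  let S : Finset ℝ :=
    (Finset.univ.filter (fun p : V × V => G.Adj p.1 p.2)).image (fun p => w p.1 + w p.2)
  have hS : ∀ x : ℝ, x ∈ S ↔ ∃ p : V × V, G.Adj p.1 p.2 ∧ w p.1 + w p.2 = x := by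
    intro x
    simp [S, Finset.mem_image, Finset.mem_filter]
  let S' : Finset ℝ := insert P S
  have hk : 0 < S'.card := Finset.card_pos.mpr ⟨P, Finset.mem_insert_self _ _⟩
  let iso := S'.orderIsoOfFin rfl
  have hpos : ∀ x ∈ S', (0:ℝ) < x := by
    intro x hx
    rcases Finset.mem_insert.mp hx with h | h
    · subst h; positivity
    · obtain ⟨p, _, hp⟩ := (hS x).mp h
      have := hwpos p.1; have := hwpos p.2; linarith
  refine ⟨S'.card, hk, ⟨{
    w := w
    a := fun i => (iso i : ℝ)
    b := fun i => (iso i : ℝ)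
    w_pos := hwpos
    a_pos := fun i => hpos _ (iso i).2
    a_le_b := fun i => le_refl _
    ordered := fun i j hij => by exact_mod_cast iso.strictMono hij
    adj_iff := ?_ }⟩⟩
  intro u v huv
  constructor
  · intro hadj
    have hmem : w u + w v ∈ S' :=
      Finset.mem_insert_of_mem ((hS _).mpr ⟨(u, v), hadj, rfl⟩)
    have h1 : iso (iso.symm ⟨w u + w v, hmem⟩) = ⟨w u + w v, hmem⟩ :=
      iso.apply_symm_apply _
    have h2 : (iso (iso.symm ⟨w u + w v, hmem⟩) : ℝ) = w u + w v :=
      congrArg Subtype.val h1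
    exact ⟨iso.symm ⟨w u + w v, hmem⟩, le_of_eq h2, le_of_eq h2.symm⟩
  · rintro ⟨i, h1, h2⟩
    have heq : (iso i : ℝ) = w u + w v := le_antisymm h1 h2
    have hmem : w u + w v ∈ S' := heq ▸ (iso i).2
    rcases Finset.mem_insert.mp hmem with h | h
    · exact absurd h (ne_of_lt (hsumlt u v))
    · obtain ⟨p, hadj, hp⟩ := (hS _).mp h
      have hcast : (2:ℕ) ^ ((e p.1 : ℕ)) + 2 ^ ((e p.2 : ℕ))
          = 2 ^ ((e u : ℕ)) + 2 ^ ((e v : ℕ)) := by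
        have : ((2 ^ ((e p.1 : ℕ)) + 2 ^ ((e p.2 : ℕ)) : ℕ) : ℝ)
            = ((2 ^ ((e u : ℕ)) + 2 ^ ((e v : ℕ)) : ℕ) : ℝ) := by
          push_cast
          simpa [w] using hp
        exact_mod_cast this
      have hne1 : (e p.1 : ℕ) ≠ (e p.2 : ℕ) := by
        intro hc
        exact hadj.ne (e.injective (Fin.val_injective hc))
      have hne2 : (e u : ℕ) ≠ (e v : ℕ) := by
        intro hc
        exact huv (e.injective (Fin.val_injective hc))
      rcases pow2_add_inj' hne1 hne2 hcast with ⟨e1, e2⟩ | ⟨e1, e2⟩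
      · have h3 : p.1 = u := e.injective (Fin.val_injective e1)
        have h4 : p.2 = v := e.injective (Fin.val_injective e2)
        rwa [h3, h4] at hadj
      · have h3 : p.1 = v := e.injective (Fin.val_injective e1)
        have h4 : p.2 = u := e.injective (Fin.val_injective e2)
        rw [h3, h4] at hadj
        exact hadj.symm

/-- Theorem 9 (general case): adding a universal vertex increases the star number by
at most one. -/
theorem stmt_8 {V : Type*} [Fintype V] (G : SimpleGraph V) (k : ℕ)
    (hg : starNumber G = k) :
    starNumber (addUniversal G) ≤ k + 1 := by
  classical
  have hne : {m | 0 < m ∧ Nonempty (StarWitness G m)}.Nonempty := exists_starWitness G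
  have hmem : k ∈ {m | 0 < m ∧ Nonempty (StarWitness G m)} := by
    rw [← hg]; exact Nat.sInf_mem hne
  obtain ⟨hkpos, ⟨W⟩⟩ := hmem
  obtain ⟨B1, hB1⟩ := Finite.exists_le W.w
  obtain ⟨B2, hB2⟩ := Finite.exists_le W.b
  set B : ℝ := max 0 (max B1 B2) with hB
  have hB0 : 0 ≤ B := le_max_left _ _
  have hwB : ∀ v, W.w v ≤ B := fun v =>
    (hB1 v).trans ((le_max_left _ _).trans (le_max_right _ _))
  have hbB : ∀ i, W.b i ≤ B := fun i =>
    (hB2 i).trans ((le_max_right _ _).trans (le_max_right _ _))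
  set M : ℝ := 2 * B + 1 with hM
  have hMpos : 0 < M := by simp only [hM]; linarith
  have hbM : ∀ i, W.b i < M := fun i => by have := hbB i; simp only [hM]; linarith
  have hsumM : ∀ u v : V, W.w u + W.w v < M := fun u v => by
    have := hwB u; have := hwB v; simp only [hM]; linarith
  let W' : StarWitness (addUniversal G) (k + 1) :=
  { w := fun o => o.elim M W.w
    a := Fin.snoc W.a M
    b := Fin.snoc W.b (M + B)
    w_pos := by rintro (_ | v); exact hMpos; exact W.w_pos v
    a_pos := by
      refine Fin.lastCases ?_ ?_
      · simpa using hMpos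
      · intro i; simpa using W.a_pos i
    a_le_b := by
      refine Fin.lastCases ?_ ?_
      · simp only [Fin.snoc_last]; linarith
      · intro i; simpa using W.a_le_b i
    ordered := by
      intro i j hij
      induction j using Fin.lastCases with
      | last =>
        have hi : i ≠ Fin.last k := ne_of_lt hij
        obtain ⟨i', rfl⟩ := Fin.exists_castSucc_eq.mpr hi
        simpa using hbM i'
      | cast j' =>
        have hi : i ≠ Fin.last k := by
          intro hc; subst hc
          exact absurd hij (not_lt.mpr (Fin.castSucc_lt_last j').le)
        obtain ⟨i', rfl⟩ := Fin.exists_castSucc_eq.mpr hi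
        have hlt : i' < j' := Fin.castSucc_lt_castSucc_iff.mp hij
        simpa using W.ordered i' j' hlt
    adj_iff := by
      rintro (_ | u) (_ | v) hne'
      · exact absurd rfl hne'
      · constructor
        · intro _
          refine ⟨Fin.last k, ?_, ?_⟩
          · simp only [Fin.snoc_last, Option.elim]
            have := W.w_pos v; linarith
          · simp only [Fin.snoc_last, Option.elim]
            have := hwB v; linarith
        · intro _; trivial
      · constructor
        · intro _
          refine ⟨Fin.last k, ?_, ?_⟩
          · simp only [Fin.snoc_last, Option.elim]
            have := W.w_pos u; linarith
          · simp only [Fin.snoc_last, Option.elim]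
            have := hwB u; linarith
        · intro _; trivial
      · have huv : u ≠ v := fun hc => hne' (by rw [hc])
        have hG : (addUniversal G).Adj (some u) (some v) ↔ G.Adj u v := Iff.rfl
        rw [hG]
        constructor
        · intro hadj
          obtain ⟨i, hi1, hi2⟩ := (W.adj_iff u v huv).mp hadj
          refine ⟨i.castSucc, ?_, ?_⟩
          · simpa [Fin.snoc_castSucc, Option.elim] using hi1
          · simpa [Fin.snoc_castSucc, Option.elim] using hi2
        · rintro ⟨i, hi1, hi2⟩
          induction i using Fin.lastCases with
          | last =>
            exfalso
            simp only [Fin.snoc_last, Option.elim] at hi1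
            have := hsumM u v
            linarith
          | cast i' =>
            refine (W.adj_iff u v huv).mpr ⟨i', ?_, ?_⟩
            · simpa [Fin.snoc_castSucc, Option.elim] using hi1
            · simpa [Fin.snoc_castSucc, Option.elim] using hi2 }
  have hmem' : k + 1 ∈ {m | 0 < m ∧ Nonempty (StarWitness (addUniversal G) m)} :=
    ⟨Nat.succ_pos k, ⟨W'⟩⟩
  exact Nat.sInf_le hmem'
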